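/- If A is a normal domain contained in a field F, then for any collection of n-tuples of elements of F each of which is algebraically independent over the fraction field of A, the intersection over all tuples of the Laurent polynomial subrings A[x₁^{±1},...,xₙ^{±1}] ⊆ F is a normal domain. -/

import Mathlib

open Polynomial

namespace UCA

theorem eval_X_pow_monic {K : Type*} [CommRing K] [Nontrivial K] {Q : Polynomial (Polynomial K)}
    (hQ : Q.Monic) {N : ℕ}
    (hcoeff : ∀ j < Q.natDegree, (Q.coeff j).natDegree < N) :
    (Q.eval ((Polynomial.X : Polynomial K) ^ N)).Monic := by
  set m := Q.natDegree with hmdef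
  have hsplit : Q.eval ((X : K[X]) ^ N) =
      X ^ (N * m) + ∑ j ∈ Finset.range m, Q.coeff j * ((X : K[X]) ^ N) ^ j := by
    rw [Polynomial.eval_eq_sum_range, Finset.sum_range_succ, ← hmdef, hQ.coeff_natDegree,
      one_mul, ← pow_mul, add_comm]
  rw [hsplit]
  apply Polynomial.monic_X_pow_add
  have hbot : (⊥ : WithBot ℕ) < (N * m : ℕ) := WithBot.bot_lt_coe _
  refine lt_of_le_of_lt (Polynomial.degree_sum_le _ _) ?_
  rw [Finset.sup_lt_iff hbot]
  intro j hj
  rw [Finset.mem_range] at hj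
  have h1 : ((X : K[X]) ^ N) ^ j = X ^ (N * j) := by rw [← pow_mul]
  have hdeg : (Q.coeff j * ((X : K[X]) ^ N) ^ j).degree ≤
      ((Q.coeff j).natDegree + N * j : ℕ) := by
    refine le_trans (Polynomial.degree_mul_le _ _) ?_
    rw [h1, Polynomial.degree_X_pow, Nat.cast_add]
    exact add_le_add Polynomial.degree_le_natDegree le_rfl
  refine lt_of_le_of_lt hdeg ?_
  rw [Nat.cast_lt]
  have h2 : (Q.coeff j).natDegree < N * (m - j) :=
    lt_of_lt_of_le (hcoeff j hj) (Nat.le_mul_of_pos_right N (by omega))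
  calc (Q.coeff j).natDegree + N * j < N * (m - j) + N * j := by omega
    _ = N * m := by rw [← Nat.mul_add]; congr 1; omega

theorem exists_map_eq_of_integral {R : Type*} [CommRing R] [IsDomain R] [IsIntegrallyClosed R]
    {K : Type*} [Field K] [Algebra R K] [IsFractionRing R K]
    {w : K[X]} {P : Polynomial (Polynomial R)} (hP : P.Monic)
    (h0 : Polynomial.eval₂ (Polynomial.mapRingHom (algebraMap R K)) w P = 0) :
    ∃ w' : R[X], w'.map (algebraMap R K) = w := by
  classical
  set φ := Polynomial.mapRingHom (algebraMap R K) with hφ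
  have hinjRK : Function.Injective (algebraMap R K) := IsFractionRing.injective R K
  have hφinj : Function.Injective φ := Polynomial.map_injective _ hinjRK
  set m := P.natDegree with hm
  -- choose N
  set N := max (w.natDegree + 1) ((Finset.range m).sup fun j => (P.coeff j).natDegree) + 1 with hN
  have hNw : w.natDegree < N := by
    have := le_max_left (w.natDegree + 1) ((Finset.range m).sup fun j => (P.coeff j).natDegree)
    omega
  have hNc : ∀ j < m, (P.coeff j).natDegree < N := by
    intro j hj
    have h1 : (P.coeff j).natDegree ≤ (Finset.range m).sup fun j => (P.coeff j).natDegree :=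
      Finset.le_sup (f := fun j => (P.coeff j).natDegree) (Finset.mem_range.mpr hj)
    have := le_max_right (w.natDegree + 1) ((Finset.range m).sup fun j => (P.coeff j).natDegree)
    omega
  -- the shifted polynomial
  set P₂ := P.comp (Polynomial.X + Polynomial.C ((Polynomial.X : R[X]) ^ N)) with hP₂def
  have hP₂monic : P₂.Monic := hP.comp_X_add_C _
  set v : K[X] := w - Polynomial.X ^ N with hv
  have hmapP₂ : P₂.map φ = (P.map φ).comp
      (Polynomial.X + Polynomial.C ((Polynomial.X : K[X]) ^ N)) := by
    rw [hP₂def, Polynomial.map_comp]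
    congr 1
    simp [hφ]
  have hrootPk : (P.map φ).eval w = 0 := by rw [Polynomial.eval_map]; exact h0
  have hrootv : (P₂.map φ).eval v = 0 := by
    rw [hmapP₂, Polynomial.eval_comp]
    have : (Polynomial.X + Polynomial.C ((Polynomial.X : K[X]) ^ N)).eval v = w := by
      simp [hv]
    rw [this, hrootPk]
  set u : K[X] := Polynomial.X ^ N - w with hu
  have humonic : u.Monic := by
    apply Polynomial.monic_X_pow_sub
    calc w.degree ≤ (w.natDegree : WithBot ℕ) := Polynomial.degree_le_natDegree
      _ < (N : WithBot ℕ) := by exact_mod_cast hNw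
  have hdvd : u ∣ (P₂.map φ).coeff 0 := by
    have h := Polynomial.sub_dvd_eval_sub v 0 (P₂.map φ)
    rw [sub_zero, hrootv, zero_sub, ← Polynomial.coeff_zero_eq_eval_zero, dvd_neg] at h
    have huv : u = -v := by rw [hu, hv]; ring
    rw [huv]
    exact (neg_dvd).mpr h
  have hc0 : (P₂.map φ).coeff 0 = (P.map φ).eval ((Polynomial.X : K[X]) ^ N) := by
    rw [Polynomial.coeff_zero_eq_eval_zero, hmapP₂, Polynomial.eval_comp]
    simp
  have hc0monic : ((P₂.map φ).coeff 0).Monic := by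
    rw [hc0]
    apply eval_X_pow_monic (hP.map φ)
    intro j hj
    rw [Polynomial.coeff_map]
    have : (φ (P.coeff j)).natDegree = (P.coeff j).natDegree := by
      simp only [hφ, Polynomial.coe_mapRingHom]
      exact Polynomial.natDegree_map_eq_of_injective hinjRK _
    rw [this]
    apply hNc
    rwa [hP.natDegree_map] at hj
  have hcoeffmap : (P₂.coeff 0).map (algebraMap R K) = (P₂.map φ).coeff 0 := by
    simp [hφ, Polynomial.coeff_map]
  have hmonicR : (P₂.coeff 0).Monic := by
    have := hc0monic
    rw [← hcoeffmap] at this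
    exact Polynomial.monic_of_injective hinjRK this
  obtain ⟨g', hg'⟩ := IsIntegrallyClosed.eq_map_mul_C_of_dvd (g := u) K hmonicR
    (by rw [hcoeffmap]; exact hdvd)
  rw [humonic.leadingCoeff, Polynomial.C_1, mul_one] at hg'
  refine ⟨Polynomial.X ^ N - g', ?_⟩
  rw [Polynomial.map_sub, Polynomial.map_pow, Polynomial.map_X, hg', hu]
  ring

/-- clearing denominators -/
theorem exists_denom {R : Type*} [CommRing R] [IsDomain R] {K : Type*} [Field K] [Algebra R K]
    [IsFractionRing R K] (a : K[X]) :
    ∃ (a' : R[X]) (d : R), d ≠ 0 ∧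
      a'.map (algebraMap R K) = Polynomial.C (algebraMap R K d) * a := by
  obtain ⟨b, hb0, hb⟩ := IsLocalization.integerNormalization_spec (nonZeroDivisors R) a
  refine ⟨IsLocalization.integerNormalization (nonZeroDivisors R) a, b, nonZeroDivisors.ne_zero hb0, ?_⟩
  ext i
  rw [hb, Polynomial.coeff_smul, Polynomial.coeff_C_mul, Algebra.smul_def]

theorem polynomial_isIntegrallyClosed (R : Type*) [CommRing R] [IsDomain R]
    [IsIntegrallyClosed R] : IsIntegrallyClosed (Polynomial R) := by
  classical
  let K := FractionRing R
  let φ : R[X] →+* K[X] := mapRingHom (algebraMap R K)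
  have hφinj : Function.Injective φ :=
    Polynomial.map_injective _ (IsFractionRing.injective R K)
  let L := RatFunc K
  let ψ : K[X] →+* L := algebraMap K[X] L
  have hψinj : Function.Injective ψ := IsFractionRing.injective K[X] L
  letI : Algebra R[X] L := ((algebraMap K[X] L).comp φ).toAlgebra
  have halg : algebraMap R[X] L = (algebraMap K[X] L).comp φ := rfl
  have hinjL : Function.Injective (algebraMap R[X] L) := by
    rw [halg]; exact hψinj.comp hφinj
  haveI : IsFractionRing R[X] L := by
    constructor
    constructor
    · -- map_units'
      rintro ⟨y, hy⟩
      have hy0 : y ≠ 0 := nonZeroDivisors.ne_zero hy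
      refine isUnit_iff_ne_zero.mpr fun h => hy0 (hinjL ?_)
      rw [h, map_zero]
    · -- surj'
      intro z
      obtain ⟨a, b, hbmem, hz⟩ := IsFractionRing.div_surjective (A := K[X]) z
      have hb0 : b ≠ 0 := nonZeroDivisors.ne_zero hbmem
      obtain ⟨a', da, hda, hamap⟩ := exists_denom (R := R) a
      obtain ⟨b', db, hdb, hbmap⟩ := exists_denom (R := R) b
      have hda' : algebraMap R K da ≠ 0 := fun h => hda ((IsFractionRing.injective R K) (by rw [h, map_zero]))
      have hdb' : algebraMap R K db ≠ 0 := fun h => hdb ((IsFractionRing.injective R K) (by rw [h, map_zero]))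
      have hq0 : b' * Polynomial.C da ≠ 0 := by
        intro h
        have : φ (b' * Polynomial.C da) = 0 := by rw [h, map_zero]
        rw [map_mul] at this
        have hb'map : φ b' = Polynomial.C (algebraMap R K db) * b := hbmap
        have hCmap : φ (Polynomial.C da) = Polynomial.C (algebraMap R K da) := by
          simp [φ]
        rw [hb'map, hCmap] at this
        have := mul_eq_zero.mp this
        rcases this with h1 | h1
        · exact (mul_ne_zero (fun hc => hdb' (by simpa using Polynomial.C_eq_zero.mp hc)) hb0) h1
        · exact hda' (by simpa using Polynomial.C_eq_zero.mp h1)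
      refine ⟨⟨a' * Polynomial.C db, ⟨b' * Polynomial.C da, mem_nonZeroDivisors_of_ne_zero hq0⟩⟩, ?_⟩
      show z * algebraMap R[X] L (b' * Polynomial.C da) = algebraMap R[X] L (a' * Polynomial.C db)
      rw [halg]
      simp only [RingHom.comp_apply]
      have hCda : φ (Polynomial.C da) = Polynomial.C (algebraMap R K da) := by simp [φ]
      have hCdb : φ (Polynomial.C db) = Polynomial.C (algebraMap R K db) := by simp [φ]
      have h1 : φ (b' * Polynomial.C da) =
          Polynomial.C (algebraMap R K db) * b * Polynomial.C (algebraMap R K da) := by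
        rw [map_mul, hCda, show φ b' = _ from hbmap]
      have h2 : φ (a' * Polynomial.C db) =
          Polynomial.C (algebraMap R K da) * a * Polynomial.C (algebraMap R K db) := by
        rw [map_mul, hCdb, show φ a' = _ from hamap]
      rw [h1, h2, ← hz]
      have hbL : (algebraMap K[X] L) b ≠ 0 := fun h => hb0 (hψinj (by rw [h, map_zero]))
      rw [map_mul, map_mul, map_mul, map_mul, div_mul_eq_mul_div, div_eq_iff hbL]
      ring
    · -- exists_of_eq
      intro p q h
      exact ⟨1, by rw [hinjL h]⟩
  haveI : Nonempty (GCDMonoid K[X]) := ⟨EuclideanDomain.gcdMonoid _⟩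
  rw [isIntegrallyClosed_iff L]
  rintro z hz
  obtain ⟨P, hPm, hP0⟩ := hz
  have hzK : IsIntegral K[X] z := by
    refine ⟨P.map φ, hPm.map φ, ?_⟩
    rw [Polynomial.eval₂_map]
    rw [halg] at hP0
    exact hP0
  obtain ⟨w, hw⟩ := IsIntegrallyClosed.isIntegral_iff.mp hzK
  have hevalw : Polynomial.eval₂ φ w P = 0 := by
    apply hψinj
    rw [map_zero, Polynomial.hom_eval₂]
    show Polynomial.eval₂ ((algebraMap K[X] L).comp φ) (algebraMap K[X] L w) P = 0
    rw [← halg, hw]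
    exact hP0
  obtain ⟨w', hw'⟩ := exists_map_eq_of_integral hPm hevalw
  refine ⟨w', ?_⟩
  rw [halg, RingHom.comp_apply]
  show algebraMap K[X] L (φ w') = z
  have : φ w' = w := hw'
  rw [this, hw]

theorem isIntegrallyClosed_of_ringEquiv {R S : Type*} [CommRing R] [IsDomain R] [CommRing S]
    [IsDomain S] [IsIntegrallyClosed R] (e : R ≃+* S) : IsIntegrallyClosed S := by
  let K := FractionRing S
  letI : Algebra R K := ((algebraMap S K).comp e.toRingHom).toAlgebra
  have halg : algebraMap R K = (algebraMap S K).comp e.toRingHom := rfl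
  haveI : IsFractionRing R K := by
    have h := (IsFractionRing.isFractionRing_iff_of_base_ringEquiv (S := K) e.symm).mp
      inferInstance
    rwa [RingEquiv.symm_symm] at h
  rw [isIntegrallyClosed_iff K]
  rintro z ⟨P, hPm, hP0⟩
  have hR : IsIntegral R z := by
    refine ⟨P.map e.symm.toRingHom, hPm.map _, ?_⟩
    rw [Polynomial.eval₂_map]
    have : (algebraMap R K).comp e.symm.toRingHom = algebraMap S K := by
      rw [halg, RingHom.comp_assoc]
      congr 1
      ext s
      simp
    rw [this]
    exact hP0
  obtain ⟨y, hy⟩ := IsIntegrallyClosed.isIntegral_iff.mp hR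
  exact ⟨e y, by rw [← hy, halg]; rfl⟩

theorem mvPolynomial_isIntegrallyClosed (R : Type*) [CommRing R] [IsDomain R]
    [IsIntegrallyClosed R] (n : ℕ) : IsIntegrallyClosed (MvPolynomial (Fin n) R) := by
  induction n with
  | zero =>
    exact isIntegrallyClosed_of_ringEquiv (MvPolynomial.isEmptyRingEquiv R (Fin 0)).symm
  | succ n ih =>
    haveI := ih
    haveI := polynomial_isIntegrallyClosed (MvPolynomial (Fin n) R)
    exact isIntegrallyClosed_of_ringEquiv
      (MvPolynomial.finSuccEquiv R n).toRingEquiv.symm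

theorem mem_range_of_integral {F S : Type*} [Field F] [CommRing S] [IsDomain S]
    [IsIntegrallyClosed S] (ψ : S →+* F) (hinj : Function.Injective ψ) {z : F} {a b : S}
    (hb : b ≠ 0) (hz : z * ψ b = ψ a) {P : Polynomial S} (hP : P.Monic)
    (h0 : Polynomial.eval₂ ψ z P = 0) : z ∈ ψ.range := by
  let L := FractionRing S
  let Ψ : L →+* F := IsFractionRing.lift (g := ψ) hinj
  have hΨalg : ∀ s : S, Ψ (algebraMap S L s) = ψ s := fun s =>
    IsFractionRing.lift_algebraMap hinj s
  have hΨinj : Function.Injective Ψ := Ψ.injective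
  have hbL : algebraMap S L b ≠ 0 := fun h => hb ((IsFractionRing.injective S L) (by rw [h, map_zero]))
  have hbF : ψ b ≠ 0 := fun h => hb (hinj (by rw [h, map_zero]))
  set w : L := algebraMap S L a / algebraMap S L b with hw
  have hΨw : Ψ w = z := by
    rw [hw, map_div₀, hΨalg, hΨalg]
    field_simp [hz.symm]
    rw [← hz]; ring
  have hint : IsIntegral S w := by
    refine ⟨P, hP, ?_⟩
    apply hΨinj
    rw [map_zero, Polynomial.hom_eval₂, hΨw]
    have : Ψ.comp (algebraMap S L) = ψ := RingHom.ext hΨalg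
    rw [this]
    exact h0
  obtain ⟨y, hy⟩ := IsIntegrallyClosed.isIntegral_iff.mp hint
  exact ⟨y, by rw [← hΨw, ← hy, hΨalg]⟩

theorem mem_range_of_integral' {F S : Type*} [Field F] [CommRing S] [IsDomain S]
    [IsIntegrallyClosed S] (ψ : S →+* F) (hψinj : Function.Injective ψ) (D : Subring F)
    (hle : ∀ d : ↥D, (d : F) ∈ Set.range ψ) {z : F} {a b : ↥D} (hb : (b : F) ≠ 0)
    (hz : z * (b : F) = (a : F)) {P : Polynomial ↥D} (hP : P.Monic)
    (h0 : Polynomial.eval₂ D.subtype z P = 0) : z ∈ Set.range ψ := by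
  have hle' : D ≤ ψ.range := by
    intro w hw
    obtain ⟨s, hs⟩ := hle ⟨w, hw⟩
    exact ⟨s, hs⟩
  have hrrinj : Function.Injective ψ.rangeRestrict := fun p q h =>
    hψinj (congrArg Subtype.val h)
  set e : S ≃+* ψ.range := RingEquiv.ofBijective ψ.rangeRestrict
    ⟨hrrinj, ψ.rangeRestrict_surjective⟩ with he
  set ρ : ↥D →+* S := e.symm.toRingHom.comp (Subring.inclusion hle') with hρ
  have hψρ : ∀ c : ↥D, ψ (ρ c) = (c : F) := by
    intro c
    have h1 : ψ.rangeRestrict (e.symm (Subring.inclusion hle' c)) =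
        e (e.symm (Subring.inclusion hle' c)) := rfl
    have h2 := congrArg Subtype.val (h1.trans (e.apply_symm_apply _))
    rw [RingHom.coe_rangeRestrict] at h2
    exact h2
  have hbne : ρ b ≠ 0 := by
    intro h
    apply hb
    rw [← hψρ b, h, map_zero]
  have hz' : z * ψ (ρ b) = ψ (ρ a) := by rw [hψρ, hψρ]; exact hz
  have hcomp : ψ.comp ρ = D.subtype := RingHom.ext hψρ
  have heval : Polynomial.eval₂ ψ z (P.map ρ) = 0 := by
    rw [Polynomial.eval₂_map, hcomp]
    exact h0
  obtain ⟨s, hs⟩ := mem_range_of_integral ψ hψinj hbne hz' (hP.map ρ) heval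
  exact ⟨s, hs⟩

set_option maxHeartbeats 2000000 in
set_option synthInstance.maxHeartbeats 1000000 in
theorem mem_closure_laurent {F : Type*} [Field F] (A : Subring F) [IsIntegrallyClosed A]
    {n : ℕ} {y : Fin n → F} (hy : AlgebraicIndependent (↥A) y) {z : F}
    (D : Subring F)
    (hD : D ≤ Subring.closure ((A : Set F) ∪ Set.range y ∪ Set.range (fun j => (y j)⁻¹)))
    {a b : ↥D} (hb : (b : F) ≠ 0) (hz : z * (b : F) = (a : F))
    {P : Polynomial ↥D} (hP : P.Monic) (h0 : Polynomial.eval₂ D.subtype z P = 0) :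
    z ∈ Subring.closure ((A : Set F) ∪ Set.range y ∪ Set.range (fun j => (y j)⁻¹)) := by
  classical
  set B : Subring F :=
    Subring.closure ((A : Set F) ∪ Set.range y ∪ Set.range (fun j => (y j)⁻¹)) with hBdef
  set f : MvPolynomial (Fin n) ↥A →+* F := (MvPolynomial.aeval y).toRingHom with hf
  have hfinj : Function.Injective f := hy
  have halgA : ∀ a : ↥A, algebraMap ↥A F a = (a : F) := fun a => rfl
  set M : Submonoid (MvPolynomial (Fin n) ↥A) :=
    Submonoid.closure (Set.range MvPolynomial.X) with hM
  have hfx : ∀ j, f (MvPolynomial.X j) = y j := fun j => MvPolynomial.aeval_X y j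
  have hfC : ∀ a : ↥A, f (MvPolynomial.C a) = (a : F) := fun a => MvPolynomial.aeval_C (f := y) a
  have hfM : ∀ m ∈ M, f m ≠ 0 := by
    intro m hm
    refine Submonoid.closure_induction ?_ ?_ ?_ hm
    · rintro _ ⟨j, rfl⟩ h
      exact MvPolynomial.X_ne_zero j (hfinj (by rw [h, map_zero]))
    · simp
    · intro p q _ _ hp hq h
      rw [map_mul] at h
      rcases mul_eq_zero.mp h with h | h
      exacts [hp h, hq h]
  have hMle : M ≤ nonZeroDivisors (MvPolynomial (Fin n) ↥A) := by
    intro m hm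
    refine mem_nonZeroDivisors_of_ne_zero fun h => hfM m hm ?_
    rw [h, map_zero]
  have hunits : ∀ m : M, IsUnit (f m) := fun m => isUnit_iff_ne_zero.mpr (hfM m m.2)
  set ψ : Localization M →+* F := IsLocalization.lift hunits with hψ
  have hψalg : ∀ r, ψ (algebraMap (MvPolynomial (Fin n) ↥A) (Localization M) r) = f r :=
    fun r => IsLocalization.lift_eq hunits r
  have halgRSinj : Function.Injective (algebraMap (MvPolynomial (Fin n) ↥A) (Localization M)) :=
    IsLocalization.injective (Localization M) hMle
  have hψinj : Function.Injective ψ := by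
    refine (IsLocalization.lift_injective_iff hunits).mpr fun p q => ⟨fun h => ?_, fun h => ?_⟩
    · rw [halgRSinj h]
    · rw [hfinj h]
  have haux : ∀ p, f p ∈ B := by
    intro p
    refine MvPolynomial.induction_on (motive := fun q => f q ∈ B) p ?_ ?_ ?_
    · intro a
      rw [hfC]
      exact Subring.subset_closure (Or.inl (Or.inl a.2))
    · intro p q hp hq
      rw [map_add]; exact add_mem hp hq
    · intro p j hp
      rw [map_mul, hfx]
      exact mul_mem hp (Subring.subset_closure (Or.inl (Or.inr ⟨j, rfl⟩)))
  have hinvmem : ∀ m ∈ M, (f m)⁻¹ ∈ B := by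
    intro m hm
    refine Submonoid.closure_induction ?_ ?_ ?_ hm
    · rintro _ ⟨j, rfl⟩
      rw [hfx]
      exact Subring.subset_closure (Or.inr ⟨j, rfl⟩)
    · simp only [map_one, inv_one]
      exact one_mem _
    · intro p q hp hq h1 h2
      rw [map_mul, mul_inv]
      exact mul_mem h1 h2
  let T : Subring F :=
    { carrier := Set.range ψ
      one_mem' := ⟨1, map_one ψ⟩
      mul_mem' := by rintro _ _ ⟨s, rfl⟩ ⟨t, rfl⟩; exact ⟨s * t, map_mul ψ s t⟩
      add_mem' := by rintro _ _ ⟨s, rfl⟩ ⟨t, rfl⟩; exact ⟨s + t, map_add ψ s t⟩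
      zero_mem' := ⟨0, map_zero ψ⟩
      neg_mem' := by rintro _ ⟨s, rfl⟩; exact ⟨-s, map_neg ψ s⟩ }
  have hTB : (T : Subring F) = B := by
    apply le_antisymm
    · rintro _ ⟨s, rfl⟩
      obtain ⟨⟨r, m⟩, rfl⟩ := IsLocalization.mk'_surjective M s
      have hspec : f r = f m * ψ (IsLocalization.mk' (Localization M) r m) :=
        (IsLocalization.lift_mk'_spec _ _ _ _).mp rfl
      have heq : ψ (IsLocalization.mk' (Localization M) r m) = f r * (f m)⁻¹ := by
        field_simp [hfM m m.2]
        rw [hspec]; ring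
      rw [heq]
      exact mul_mem (haux r) (hinvmem m m.2)
    · rw [hBdef]
      refine Subring.closure_le.mpr ?_
      have hshow : ∀ w : F, w ∈ Set.range ⇑ψ → w ∈ (T : Set F) := fun w h => h
      rintro w ((hw | ⟨j, rfl⟩) | ⟨j, rfl⟩)
      · exact hshow w ⟨algebraMap (MvPolynomial (Fin n) ↥A) (Localization M) (MvPolynomial.C (⟨w, hw⟩ : ↥A)), by rw [hψalg, hfC]⟩
      · exact hshow (y j) ⟨algebraMap (MvPolynomial (Fin n) ↥A) (Localization M) (MvPolynomial.X j), by rw [hψalg, hfx]⟩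
      · refine hshow ((y j)⁻¹) ⟨IsLocalization.mk' (Localization M) 1
          (⟨MvPolynomial.X j, Submonoid.subset_closure ⟨j, rfl⟩⟩ : M), ?_⟩
        have hspec := IsLocalization.mk'_spec (Localization M) 1
          (⟨MvPolynomial.X j, Submonoid.subset_closure ⟨j, rfl⟩⟩ : M)
        have h2 := congrArg ψ hspec
        rw [map_mul, map_one, hψalg] at h2
        rw [map_one, hfx] at h2
        exact eq_inv_of_mul_eq_one_left h2
  haveI : IsIntegrallyClosed (MvPolynomial (Fin n) ↥A) :=
    mvPolynomial_isIntegrallyClosed ↥A n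
  haveI : IsDomain (Localization M) := IsLocalization.isDomain_localization hMle
  haveI : IsIntegrallyClosed (Localization M) :=
    isIntegrallyClosed_of_isLocalization (Localization M) M hMle
  have hle : ∀ d : ↥D, (d : F) ∈ Set.range ψ := by
    intro d
    have : (d : F) ∈ T := by rw [hTB]; exact hD d.2
    exact this
  have hfin := mem_range_of_integral' (S := Localization M) ψ hψinj D hle hb hz hP h0
  have : z ∈ T := hfin
  rwa [hTB] at this

end UCA


/-- If `A` is a normal domain contained in a field `F`, then for any collection
of `n`-tuples of elements of `F`, each algebraically independent over (the
fraction field of) `A`, the intersection over all tuples of the Laurent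
polynomial subrings `A[x₁^{±1}, …, xₙ^{±1}] ⊆ F` is a normal domain. -/
theorem upper_cluster_algebra_normal {F : Type*} [Field F] (A : Subring F)
    [IsIntegrallyClosed A] (n : ℕ) {ι : Type*} (x : ι → Fin n → F)
    (hx : ∀ i, AlgebraicIndependent A (x i)) :
    IsIntegrallyClosed
      (⨅ i, Subring.closure
        ((A : Set F) ∪ Set.range (x i) ∪ Set.range (fun j => (x i j)⁻¹)) : Subring F) := by
  classical
  set C : Subring F := ⨅ i, Subring.closure
      ((A : Set F) ∪ Set.range (x i) ∪ Set.range (fun j => (x i j)⁻¹)) with hC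
  have hsubinj : Function.Injective (C.subtype : ↥C →+* F) := Subtype.coe_injective
  rw [isIntegrallyClosed_iff (FractionRing ↥C)]
  intro x0 hx0
  obtain ⟨P₀, hP₀m, hP₀0⟩ := hx0
  set g : FractionRing ↥C →+* F := IsFractionRing.lift (g := C.subtype) hsubinj with hg
  have hgalg : ∀ c : ↥C, g (algebraMap ↥C (FractionRing ↥C) c) = (c : F) := fun c =>
    IsFractionRing.lift_algebraMap hsubinj c
  have hginj : Function.Injective g := g.injective
  set z : F := g x0 with hzdef
  obtain ⟨a₀, b₀, hb₀mem, hdiv⟩ := IsFractionRing.div_surjective (A := ↥C) x0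
  have hb₀ : b₀ ≠ 0 := nonZeroDivisors.ne_zero hb₀mem
  have hb₀F : (b₀ : F) ≠ 0 := fun h => hb₀ (by exact_mod_cast h)
  have hz : z * (b₀ : F) = (a₀ : F) := by
    rw [hzdef, ← hdiv, map_div₀, hgalg, hgalg]
    exact div_mul_cancel₀ _ hb₀F
  have hzint : Polynomial.eval₂ (C.subtype) z P₀ = 0 := by
    have h1 : g.comp (algebraMap ↥C (FractionRing ↥C)) = C.subtype := RingHom.ext hgalg
    have h2 := Polynomial.hom_eval₂ P₀ (algebraMap ↥C (FractionRing ↥C)) g x0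
    rw [hP₀0, map_zero, h1] at h2
    exact h2.symm
  have hmain : ∀ i, z ∈ Subring.closure
      ((A : Set F) ∪ Set.range (x i) ∪ Set.range (fun j => (x i j)⁻¹)) := fun i =>
    UCA.mem_closure_laurent A (hx i) C (iInf_le _ i) hb₀F hz hP₀m hzint
  have hzC : z ∈ C := by rw [hC]; exact Subring.mem_iInf.mpr hmain
  refine ⟨⟨z, hzC⟩, ?_⟩
  apply hginj
  rw [hgalg]
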